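/- In the setting of the previous statement, with v_H chosen so that v_L(1-p) + v_H p = v_H · p/(1 - q(1-p)), the ratio Prophet/Algorithm tends to 1 + q = 2 - 1/μ as p → 0⁺. Hence no online algorithm beats competitive ratio 2 - 1/μ for a geometric horizon with mean μ. -/

import Mathlib

/-- The high value chosen so that the optimal algorithm is indifferent between its two
options: v_L(1-p) + v_H p = v_H · p/(1 - q(1-p)). -/
noncomputable def vHind (q vL p : ℝ) : ℝ := vL * (1 - p) / (p / (1 - q * (1 - p)) - p)

/-- Optimal algorithm's expected welfare in the two-point geometric-horizon setting. -/
noncomputable def ALGstar (q vL p : ℝ) : ℝ :=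
  max (vL * (1 - p) + vHind q vL p * p) (vHind q vL p * (p / (1 - q * (1 - p))))

/-- Prophet's expected welfare in the two-point geometric-horizon setting. -/
noncomputable def PROtp (q vL p : ℝ) : ℝ :=
  vHind q vL p * (p / (1 - q * (1 - p))) + vL * (1 - p / (1 - q * (1 - p)))

lemma ratio_eq (q vL : ℝ) (hq0 : 0 < q) (hq1 : q < 1) (hvL : 0 < vL) {p : ℝ}
    (hp : p ∈ Set.Ioo (0:ℝ) 1) :
    PROtp q vL p / ALGstar q vL p = 1 + q * (1 - p / (1 - q * (1 - p))) := by
  obtain ⟨hp0, hp1⟩ := hp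
  have hD : 0 < 1 - q * (1 - p) := by nlinarith
  have hDne : (1 - q * (1 - p)) ≠ 0 := ne_of_gt hD
  have hden : p / (1 - q * (1 - p)) - p = p * q * (1 - p) / (1 - q * (1 - p)) := by
    field_simp; ring
  have h1p : (0:ℝ) < 1 - p := by linarith
  have hdne : p / (1 - q * (1 - p)) - p ≠ 0 := by
    rw [hden]
    positivity
  have hvH : vHind q vL p = vL * (1 - q * (1 - p)) / (p * q) := by
    rw [vHind, hden]
    rw [div_div_eq_mul_div]
    rw [div_eq_div_iff (by positivity) (by positivity)]
    ring
  have h1 : vHind q vL p * (p / (1 - q * (1 - p))) = vL / q := by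
    rw [hvH]; field_simp
  have h2 : vL * (1 - p) + vHind q vL p * p = vL / q := by
    rw [hvH]; field_simp; ring
  rw [PROtp, ALGstar, h1, h2, max_self]
  have hvq : vL / q ≠ 0 := by positivity
  field_simp

/-- With v_H chosen by indifference, the ratio Prophet/Algorithm tends to 1 + q
(= 2 - 1/μ for a geometric horizon with mean μ = 1/(1-q)) as p → 0⁻. -/
theorem two_point_ratio_limit (q vL : ℝ) (hq0 : 0 < q) (hq1 : q < 1) (hvL : 0 < vL) :
    Filter.Tendsto (fun p : ℝ => PROtp q vL p / ALGstar q vL p)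
      (nhdsWithin 0 (Set.Ioi 0)) (nhds (1 + q)) := by
  have hmem : Set.Ioo (0:ℝ) 1 ∈ nhdsWithin 0 (Set.Ioi 0) :=
    Ioo_mem_nhdsGT_of_mem (by simp : (0:ℝ) ∈ Set.Ico 0 1)
  have heq : (fun p : ℝ => 1 + q * (1 - p / (1 - q * (1 - p)))) =ᶠ[nhdsWithin 0 (Set.Ioi 0)]
      (fun p : ℝ => PROtp q vL p / ALGstar q vL p) := by
    filter_upwards [hmem] with p hp
    exact (ratio_eq q vL hq0 hq1 hvL hp).symm
  refine Filter.Tendsto.congr' heq ?_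
  have hcont : ContinuousAt (fun p : ℝ => 1 + q * (1 - p / (1 - q * (1 - p)))) 0 := by
    have hne : (1 : ℝ) - q * (1 - 0) ≠ 0 := by simp; linarith
    fun_prop (disch := assumption)
  have := hcont.tendsto
  simp only [div_eq_mul_inv, zero_mul, mul_zero, sub_zero, mul_one] at this
  exact Filter.Tendsto.mono_left (by simpa [div_eq_mul_inv] using this) nhdsWithin_le_nhds
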